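/- Let V be a real normed vector space and x₁ ∈ V, and define μˣ : ℝ → V by μˣ t = (t²(t² − 4t + 6)/3) • x₁ and μᵛ : ℝ → V by μᵛ t = (4t(t² − 3t + 3)/3) • x₁. Then μˣ 0 = 0, μᵛ 0 = 0, μˣ 1 = x₁, and for every t < 1: μˣ has derivative μᵛ t at t, and μᵛ has derivative (4/(1−t)) • ((1−t)⁻¹ • (x₁ − μˣ t) − μᵛ t) at t. That is, (μˣ, μᵛ) is the solution of the mean ODE μ̇ˣ = μᵛ, μ̇ᵛ = g² P₁₁ ((x₁ − μˣ)/(1−t) − μᵛ) of the optimally controlled phase-space bridge started at the origin, where g² P₁₁ = 4/(1−t). -/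

import Mathlib

/-- The means `μˣ, μᵛ` of the optimally controlled phase-space bridge started at the
origin satisfy `μˣ 0 = 0`, `μᵛ 0 = 0`, `μˣ 1 = x₁`, and solve the mean ODE
`μ̇ˣ = μᵛ`, `μ̇ᵛ = (4/(1−t)) ((x₁ − μˣ)/(1−t) − μᵛ)` for all `t < 1`. -/
theorem bridge_mean_ode
    {V : Type*} [NormedAddCommGroup V] [NormedSpace ℝ V] (x₁ : V)
    (μx μv : ℝ → V)
    (hμx : ∀ t, μx t = (t ^ 2 * (t ^ 2 - 4 * t + 6) / 3) • x₁)
    (hμv : ∀ t, μv t = (4 * t * (t ^ 2 - 3 * t + 3) / 3) • x₁) :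
    μx 0 = 0 ∧ μv 0 = 0 ∧ μx 1 = x₁ ∧
    ∀ t : ℝ, t < 1 →
      HasDerivAt μx (μv t) t ∧
      HasDerivAt μv ((4 / (1 - t)) • ((1 - t)⁻¹ • (x₁ - μx t) - μv t)) t := by
  refine ⟨by simp [hμx], by simp [hμv], by norm_num [hμx], fun t ht => ?_⟩
  have h1 : (1 : ℝ) - t ≠ 0 := by linarith
  have hfx : HasDerivAt (fun s : ℝ => s ^ 2 * (s ^ 2 - 4 * s + 6) / 3)
      (4 * t * (t ^ 2 - 3 * t + 3) / 3) t := by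
    have h := (((hasDerivAt_pow 2 t).mul (((hasDerivAt_pow 2 t).sub
        ((hasDerivAt_id t).const_mul 4)).add_const 6)).div_const 3)
    simp only [id_eq] at h
    exact h.congr_deriv (by simp only [Pi.sub_apply]; push_cast; ring)
  have hfv : HasDerivAt (fun s : ℝ => 4 * s * (s ^ 2 - 3 * s + 3) / 3)
      (4 * (1 - t) ^ 2) t := by
    have h := ((((hasDerivAt_id t).const_mul 4).mul (((hasDerivAt_pow 2 t).sub
        ((hasDerivAt_id t).const_mul 3)).add_const 3)).div_const 3)
    simp only [id_eq] at h
    exact h.congr_deriv (by simp only [Pi.sub_apply]; push_cast; ring)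
  constructor
  · have := hfx.smul_const x₁
    rw [hμv t]
    convert this using 2 <;> simp [hμx]
  · have := hfv.smul_const x₁
    have heq : (4 / (1 - t)) • ((1 - t)⁻¹ • (x₁ - μx t) - μv t) = (4 * (1 - t) ^ 2) • x₁ := by
      rw [hμx t, hμv t, smul_sub, smul_smul, smul_sub, smul_smul, smul_smul,
        ← sub_smul, ← sub_smul]
      congr 1
      field_simp
      ring
    rw [heq]
    convert this using 2 <;> simp [hμv]
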